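/- Let M be an n-dimensional Legendrian submanifold of a (2n+1)-dimensional Sasaki manifold (N, φ, ξ, η, ḡ). Then the second fundamental form B and mean curvature vector H satisfy |B|² ≥ (3/(n+2))|H|². -/

import Mathlib

set_option linter.unreachableTactic false
set_option linter.unusedTactic false

open scoped RealInnerProductSpace

open Finset in
lemma alg_ineq {n : ℕ} (σ : Fin n → Fin n → Fin n → ℝ)
    (h1 : ∀ i j k, σ j i k = σ i j k) (h2 : ∀ i j k, σ i k j = σ i j k) :
    3 * ∑ k, (∑ i, σ i i k) ^ 2 ≤ ((n : ℝ) + 2) * ∑ i, ∑ j, ∑ k, (σ i j k) ^ 2 := by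
  set T : Fin n → ℝ := fun k => ∑ i, σ i i k with hT
  set S : ℝ := ∑ k, (T k) ^ 2 with hS
  set X : ℝ := ∑ i, ∑ j, ∑ k, (σ i j k) ^ 2 with hX
  have hn : (0:ℝ) < (n:ℝ) + 2 := by positivity
  -- dummy
  -- the SOS
  have hQ : (0:ℝ) ≤ ∑ i, ∑ j, ∑ k,
      (((n:ℝ)+2) * σ i j k - ((if i = j then T k else 0) + (if j = k then T i else 0)
        + (if i = k then T j else 0))) ^ 2 := by
    refine Finset.sum_nonneg fun i _ => Finset.sum_nonneg fun j _ => Finset.sum_nonneg fun k _ => sq_nonneg _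
  -- expansion
  have expand : ∀ i j k : Fin n,
      (((n:ℝ)+2) * σ i j k - ((if i = j then T k else 0) + (if j = k then T i else 0)
        + (if i = k then T j else 0))) ^ 2
      = ((n:ℝ)+2)^2 * (σ i j k)^2
        + (if i = j then T k ^ 2 else 0) + (if j = k then T i ^ 2 else 0)
        + (if i = k then T j ^ 2 else 0)
        - 2*((n:ℝ)+2) * (σ i j k * (if i = j then T k else 0))
        - 2*((n:ℝ)+2) * (σ i j k * (if j = k then T i else 0))
        - 2*((n:ℝ)+2) * (σ i j k * (if i = k then T j else 0))
        + 2 * (if i = j then (if j = k then T k * T i else 0) else 0)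
        + 2 * (if i = j then (if i = k then T k * T j else 0) else 0)
        + 2 * (if j = k then (if i = k then T i * T j else 0) else 0) := by
    intro i j k
    split_ifs <;> first | ring | simp_all
  -- helper: pull an index-independent if out of a sum
  have hpull : ∀ (c : Prop) [Decidable c] (f : Fin n → ℝ),
      ∑ k, (if c then f k else 0) = if c then ∑ k, f k else 0 := by
    intro c inst f; split <;> simp
  have hsym1 : ∀ i j, σ i j j = σ j j i := fun i j => (h1 i j j).symm.trans (h2 j j i)
  have hsym2 : ∀ i j, σ i j i = σ i i j := fun i j => h2 i i j
  have e1 : ∑ i : Fin n, ∑ j : Fin n, ∑ k : Fin n, (if i = j then T k ^ 2 else 0) = (n:ℝ) * S := by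
    rw [Finset.sum_congr rfl fun i _ => Finset.sum_congr rfl fun j _ => hpull _ _]
    simp only [← hS, Finset.sum_ite_eq, Finset.mem_univ, if_true]
    simp [Finset.sum_const, Finset.card_univ, nsmul_eq_mul]
  have e2 : ∑ i : Fin n, ∑ j : Fin n, ∑ k : Fin n, (if j = k then T i ^ 2 else 0) = (n:ℝ) * S := by
    simp only [Finset.sum_ite_eq, Finset.mem_univ, if_true]
    rw [Finset.sum_comm]
    simp [Finset.sum_const, Finset.card_univ, nsmul_eq_mul, hS, Finset.mul_sum]
  have e3 : ∑ i : Fin n, ∑ j : Fin n, ∑ k : Fin n, (if i = k then T j ^ 2 else 0) = (n:ℝ) * S := by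
    simp only [Finset.sum_ite_eq, Finset.mem_univ, if_true]
    simp [Finset.sum_const, Finset.card_univ, nsmul_eq_mul, hS, Finset.mul_sum]
  have a1 : ∑ i, ∑ j, ∑ k, σ i j k * (if i = j then T k else 0) = S := by
    simp only [mul_ite, mul_zero]
    rw [Finset.sum_congr rfl fun i _ => Finset.sum_congr rfl fun j _ => hpull _ _]
    simp only [Finset.sum_ite_eq, Finset.mem_univ, if_true]
    rw [Finset.sum_comm]
    refine Finset.sum_congr rfl fun k _ => ?_
    rw [← Finset.sum_mul, hT, sq]
  have a2 : ∑ i, ∑ j, ∑ k, σ i j k * (if j = k then T i else 0) = S := by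
    simp only [mul_ite, mul_zero, Finset.sum_ite_eq, Finset.mem_univ, if_true]
    have : ∀ i : Fin n, ∑ j, σ i j j * T i = T i ^ 2 := by
      intro i
      rw [show (∑ j, σ i j j * T i) = (∑ j, σ j j i) * T i by
        rw [Finset.sum_mul]; exact Finset.sum_congr rfl fun j _ => by rw [hsym1], hT, sq]
    simp only [this]
    exact hS.symm
  have a3 : ∑ i, ∑ j, ∑ k, σ i j k * (if i = k then T j else 0) = S := by
    simp only [mul_ite, mul_zero, Finset.sum_ite_eq, Finset.mem_univ, if_true]
    rw [Finset.sum_comm]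
    refine Finset.sum_congr rfl fun j _ => ?_
    rw [show (∑ i, σ i j i * T j) = (∑ i, σ i i j) * T j by
      rw [Finset.sum_mul]; exact Finset.sum_congr rfl fun i _ => by rw [hsym2], hT, sq]
  have c1 : ∑ i : Fin n, ∑ j : Fin n, ∑ k : Fin n, (if i = j then (if j = k then T k * T i else 0) else 0) = S := by
    rw [Finset.sum_congr rfl fun i _ => Finset.sum_congr rfl fun j _ => hpull _ _]
    simp only [Finset.sum_ite_eq, Finset.mem_univ, if_true]
    exact Finset.sum_congr rfl fun i _ => by rw [sq]
  have c2 : ∑ i : Fin n, ∑ j : Fin n, ∑ k : Fin n, (if i = j then (if i = k then T k * T j else 0) else 0) = S := by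
    rw [Finset.sum_congr rfl fun i _ => Finset.sum_congr rfl fun j _ => hpull _ _]
    simp only [Finset.sum_ite_eq, Finset.mem_univ, if_true]
    exact Finset.sum_congr rfl fun i _ => by rw [sq]
  have c3 : ∑ i : Fin n, ∑ j : Fin n, ∑ k : Fin n, (if j = k then (if i = k then T i * T j else 0) else 0) = S := by
    simp only [Finset.sum_ite_eq, Finset.mem_univ, if_true]
    exact Finset.sum_congr rfl fun i _ => by rw [sq]
  have key : (∑ i, ∑ j, ∑ k,
      (((n:ℝ)+2) * σ i j k - ((if i = j then T k else 0) + (if j = k then T i else 0)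
        + (if i = k then T j else 0))) ^ 2)
      = ((n:ℝ)+2)^2 * X + ((n:ℝ)*S + (n:ℝ)*S + (n:ℝ)*S)
        - 2*((n:ℝ)+2)*S - 2*((n:ℝ)+2)*S - 2*((n:ℝ)+2)*S + 2*S + 2*S + 2*S := by
    rw [Finset.sum_congr rfl fun i _ => Finset.sum_congr rfl fun j _ =>
      Finset.sum_congr rfl fun k _ => expand i j k]
    simp only [Finset.sum_add_distrib, Finset.sum_sub_distrib, ← Finset.mul_sum]
    rw [e1, e2, e3, a1, a2, a3, c1, c2, c3, ← hX]
    ring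
  rw [key] at hQ
  nlinarith [sq_nonneg S, sq_nonneg X]


theorem stmt_6 {E : Type*} [NormedAddCommGroup E] [InnerProductSpace ℝ E]
    [FiniteDimensional ℝ E] {M : Type*} {n : ℕ}
    (hdim : Module.finrank ℝ E = 2 * n + 1)
    (Tang : M → Submodule ℝ E)
    (hTdim : ∀ p, Module.finrank ℝ (Tang p) = n)
    (D : (M → E) → (M → ℝ) → (M → ℝ))
    (conn : (M → E) → (M → E) → (M → E))
    (hD0 : ∀ X : M → E, D X (fun _ => (0 : ℝ)) = fun _ => 0)
    (hcompat : ∀ X Y Z : M → E,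
      D X (fun p => ⟪Y p, Z p⟫) = fun p => ⟪conn X Y p, Z p⟫ + ⟪Y p, conn X Z p⟫)
    (htors : ∀ X Y : M → E, (∀ p, X p ∈ Tang p) → (∀ p, Y p ∈ Tang p) →
      ∀ p, conn X Y p - conn Y X p ∈ Tang p)
    (φ : M → E →ₗ[ℝ] E) (ξ : M → E)
    (hξunit : ∀ p, ‖ξ p‖ = 1)
    (hφξ : ∀ p, φ p (ξ p) = 0)
    (hφ2 : ∀ p x, φ p (φ p x) = -x + ⟪x, ξ p⟫ • ξ p)
    (hskew : ∀ p x y, ⟪φ p x, y⟫ + ⟪x, φ p y⟫ = 0)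
    (hconnξ : ∀ X : M → E, conn X ξ = fun p => -(φ p (X p)))
    (hconnφ : ∀ X Y : M → E, conn X (fun p => φ p (Y p))
      = fun p => φ p (conn X Y p) + ⟪X p, Y p⟫ • ξ p - ⟪Y p, ξ p⟫ • X p)
    (hLeg : ∀ p, ∀ v ∈ Tang p, ⟪v, ξ p⟫ = 0)
    (hLegφ : ∀ p, ∀ v ∈ Tang p, ∀ w ∈ Tang p, ⟪φ p v, w⟫ = 0)
    (e : Fin n → M → E)
    (he_t : ∀ i p, e i p ∈ Tang p)
    (he_on : ∀ p, Orthonormal ℝ (fun i => e i p)) :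
    let B : (M → E) → (M → E) → M → E := fun U V p =>
      conn U V p - (Submodule.orthogonalProjectionOnto (Tang p) (conn U V p) : E)
    ∀ p, (3 / ((n : ℝ) + 2)) * ‖∑ i, B (e i) (e i) p‖ ^ 2
      ≤ ∑ i, ∑ j, ‖B (e i) (e j) p‖ ^ 2 := by
  intro B p
  classical
  have hB : ∀ U V (q : M), B U V q = conn U V q
      - (Submodule.orthogonalProjectionOnto (Tang q) (conn U V q) : E) := fun U V q => rfl
  have hsk : ∀ x y : E, ⟪φ p x, y⟫ = -⟪x, φ p y⟫ := fun x y =>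
    eq_neg_of_add_eq_zero_left (hskew p x y)
  have heξ : ∀ i, ⟪e i p, ξ p⟫ = 0 := fun i => hLeg p _ (he_t i p)
  -- the normal frame f k = φ (e k)
  set f : Fin n → E := fun k => φ p (e k p) with hf
  have hee : ∀ i j, ⟪e i p, e j p⟫ = if i = j then (1:ℝ) else 0 := fun i j =>
    orthonormal_iff_ite.mp (he_on p) i j
  have hff : ∀ k l, ⟪f k, f l⟫ = if k = l then (1:ℝ) else 0 := by
    intro k l
    rw [hf]
    rw [hsk, hφ2, inner_add_right, inner_neg_right, inner_smul_right, heξ]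
    simp [hee k l]
  have hfξ : ∀ k, ⟪f k, ξ p⟫ = 0 := by
    intro k
    rw [hf, hsk, hφξ]
    simp
  have hfe : ∀ k i, ⟪f k, e i p⟫ = 0 := fun k i => hLegφ p _ (he_t k p) _ (he_t i p)
  -- combined orthonormal family
  set g : (Fin n ⊕ Fin n ⊕ Fin 1) → E :=
    Sum.elim (fun i => e i p) (Sum.elim f (fun _ => ξ p)) with hg
  have hgon : Orthonormal ℝ g := by
    rw [orthonormal_iff_ite]
    rintro (i | k | u) (j | l | w) <;>
      simp only [hg, Sum.elim_inl, Sum.elim_inr, Sum.inl.injEq, Sum.inr.injEq,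
        reduceCtorEq, if_false]
    · simpa using hee i j
    · rw [real_inner_comm]; exact hfe l i
    · exact heξ i
    · exact hfe k j
    · simpa using hff k l
    · exact hfξ k
    · rw [real_inner_comm]; exact heξ j
    · rw [real_inner_comm]; exact hfξ l
    · rw [Subsingleton.elim u w]
      simp [real_inner_self_eq_norm_sq, hξunit p]
  -- g is an orthonormal basis
  have hcard : Fintype.card (Fin n ⊕ Fin n ⊕ Fin 1) = Module.finrank ℝ E := by
    simp [hdim]; omega
  have hspan : ⊤ ≤ Submodule.span ℝ (Set.range g) :=
    le_of_eq (hgon.linearIndependent.span_eq_top_of_card_eq_finrank' hcard).symm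
  set b : OrthonormalBasis (Fin n ⊕ Fin n ⊕ Fin 1) ℝ E := OrthonormalBasis.mk hgon hspan
    with hb
  have hbg : ⇑b = g := OrthonormalBasis.coe_mk hgon hspan
  -- Parseval
  have par : ∀ v : E, ‖v‖ ^ 2 = (∑ i, ⟪v, e i p⟫ ^ 2) + ((∑ k, ⟪v, f k⟫ ^ 2) + ⟪v, ξ p⟫ ^ 2) := by
    intro v
    have h0 := b.sum_inner_mul_inner v v
    rw [real_inner_self_eq_norm_sq] at h0
    rw [← h0, Fintype.sum_sum_type, Fintype.sum_sum_type]
    simp only [hbg, hg, Sum.elim_inl, Sum.elim_inr]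
    congr 1
    · exact Finset.sum_congr rfl fun i _ => by rw [real_inner_comm (e i p) v, sq]
    congr 1
    · exact Finset.sum_congr rfl fun k _ => by rw [real_inner_comm (f k) v, sq]
    · simp [real_inner_comm (ξ p) v, sq]
  -- second fundamental form values
  set w : Fin n → Fin n → E := fun i j => B (e i) (e j) p with hw
  have hw_orth : ∀ i j, w i j ∈ (Tang p)ᗮ := fun i j =>
    Submodule.sub_starProjection_mem_orthogonal (K := Tang p) (conn (e i) (e j) p)
  have hw_e : ∀ i j l, ⟪w i j, e l p⟫ = 0 := fun i j l => by
    rw [real_inner_comm]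
    exact (Submodule.mem_orthogonal (Tang p) (w i j)).mp (hw_orth i j) _ (he_t l p)
  -- inner products with ξ vanish
  have hconnξ0 : ∀ i j, ⟪conn (e i) (e j) p, ξ p⟫ = 0 := by
    intro i j
    have hfz : (fun q => ⟪e j q, ξ q⟫) = fun _ => (0:ℝ) := funext fun q => hLeg q _ (he_t j q)
    have hc := hcompat (e i) (e j) ξ
    rw [hfz, hD0] at hc
    have hc' := congrFun hc.symm p
    rw [congrFun (hconnξ (e i)) p] at hc'
    have : ⟪e j p, -(φ p (e i p))⟫ = 0 := by
      rw [inner_neg_right, real_inner_comm, hLegφ p _ (he_t i p) _ (he_t j p), neg_zero]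
    rw [this, add_zero] at hc'
    exact hc'
  have hw_ξ : ∀ i j, ⟪w i j, ξ p⟫ = 0 := by
    intro i j
    simp only [hw, hB, inner_sub_left, hconnξ0 i j]
    rw [hLeg p _ (Submodule.orthogonalProjectionOnto (Tang p) (conn (e i) (e j) p)).2]
    ring
  -- the symmetric tensor
  set σ : Fin n → Fin n → Fin n → ℝ := fun i j k => ⟪w i j, f k⟫ with hσ
  have hwf : ∀ i j k, σ i j k = ⟪conn (e i) (e j) p, f k⟫ := by
    intro i j k
    simp only [hσ, hw, hB, inner_sub_left, hf]
    rw [real_inner_comm (φ p (e k p)) ((Submodule.orthogonalProjectionOnto (Tang p) (conn (e i) (e j) p)) : E)]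
    rw [hLegφ p _ (he_t k p) _ (Submodule.orthogonalProjectionOnto (Tang p) (conn (e i) (e j) p)).2]
    ring
  -- symmetry in the first two arguments
  have hwsym : ∀ i j, w j i = w i j := by
    intro i j
    have hd : conn (e i) (e j) p - conn (e j) (e i) p ∈ Tang p :=
      htors _ _ (he_t i) (he_t j) p
    have hdiff : w i j - w j i = (conn (e i) (e j) p - conn (e j) (e i) p)
        - (Submodule.orthogonalProjectionOnto (Tang p) (conn (e i) (e j) p - conn (e j) (e i) p) : E) := by
      simp only [hw, hB, map_sub, Submodule.coe_sub]
      abel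
    rw [show (Submodule.orthogonalProjectionOnto (Tang p) (conn (e i) (e j) p - conn (e j) (e i) p) : E) = _ from
      Submodule.starProjection_eq_self_iff.mpr hd, sub_self] at hdiff
    exact (sub_eq_zero.mp hdiff).symm
  -- symmetry in the last two arguments
  have key2 : ∀ i j k, ⟪conn (e i) (e j) p, f k⟫ = ⟪conn (e i) (e k) p, f j⟫ := by
    intro i j k
    have hfz : (fun q => ⟪e j q, φ q (e k q)⟫) = fun _ => (0:ℝ) := funext fun q => by
      rw [real_inner_comm]; exact hLegφ q _ (he_t k q) _ (he_t j q)
    have hc := hcompat (e i) (e j) (fun q => φ q (e k q))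
    rw [hfz, hD0] at hc
    have hc' := congrFun hc.symm p
    rw [congrFun (hconnφ (e i) (e k)) p] at hc'
    rw [inner_sub_right, inner_add_right, inner_smul_right, inner_smul_right] at hc'
    rw [heξ j, heξ k] at hc'
    have hφc : ⟪e j p, φ p (conn (e i) (e k) p)⟫ = -⟪conn (e i) (e k) p, f j⟫ := by
      rw [hf]
      linarith [hskew p (e j p) (conn (e i) (e k) p),
        real_inner_comm (φ p (e j p)) (conn (e i) (e k) p)]
    rw [hφc] at hc'
    simp only [hf] at hc' ⊢
    linarith [hc']
  have hsig1 : ∀ i j k, σ j i k = σ i j k := by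
    intro i j k; simp only [hσ, hwsym i j]
  have hsig2 : ∀ i j k, σ i k j = σ i j k := by
    intro i j k; rw [hwf, hwf, key2 i k j]
  -- mean curvature coefficients
  have hHf : ∀ k, ⟪∑ i, w i i, f k⟫ = ∑ i, σ i i k := by
    intro k; rw [sum_inner]
  have hHe : ∀ l, ⟪∑ i, w i i, e l p⟫ = 0 := by
    intro l; rw [sum_inner]
    exact Finset.sum_eq_zero fun i _ => hw_e i i l
  have hHξ : ⟪∑ i, w i i, ξ p⟫ = 0 := by
    rw [sum_inner]
    exact Finset.sum_eq_zero fun i _ => hw_ξ i i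
  have hHnorm : ‖∑ i, w i i‖ ^ 2 = ∑ k, (∑ i, σ i i k) ^ 2 := by
    rw [par]
    simp only [hHe, hHξ, hHf]
    simp
  -- Bessel for each entry
  have hlow : ∀ i j, ∑ k, σ i j k ^ 2 ≤ ‖w i j‖ ^ 2 := by
    intro i j
    rw [par (w i j)]
    have h1' : (0:ℝ) ≤ ∑ l, ⟪w i j, e l p⟫ ^ 2 :=
      Finset.sum_nonneg fun l _ => sq_nonneg _
    have h2' : (0:ℝ) ≤ ⟪w i j, ξ p⟫ ^ 2 := sq_nonneg _
    have h3' : (∑ k, σ i j k ^ 2) = ∑ k, ⟪w i j, f k⟫ ^ 2 := rfl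
    linarith
  have hRHS : ∑ i, ∑ j, ∑ k, σ i j k ^ 2 ≤ ∑ i, ∑ j, ‖w i j‖ ^ 2 :=
    Finset.sum_le_sum fun i _ => Finset.sum_le_sum fun j _ => hlow i j
  have halg := alg_ineq σ hsig1 hsig2
  have hn : (0:ℝ) < (n:ℝ) + 2 := by positivity
  calc (3 / ((n : ℝ) + 2)) * ‖∑ i, B (e i) (e i) p‖ ^ 2
      = (3 / ((n : ℝ) + 2)) * ∑ k, (∑ i, σ i i k) ^ 2 := by
        rw [show (∑ i, B (e i) (e i) p) = ∑ i, w i i from rfl, hHnorm]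
    _ ≤ ∑ i, ∑ j, ‖w i j‖ ^ 2 := by
        rw [div_mul_eq_mul_div, div_le_iff₀ hn]
        nlinarith [halg, hRHS, hn]
    _ = ∑ i, ∑ j, ‖B (e i) (e j) p‖ ^ 2 := rfl
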